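/- Let A be a conic acceptance set in an ordered topological vector space X and S a traded asset. Then ρ_{A,S}(X) < ∞ for all X if and only if S_T ∈ Core(A), and ρ_{A,S}(X) > −∞ for all X if and only if −S_T ∈ Core(Aᶜ). -/

import Mathlib

set_option linter.unusedSectionVars false


open Filter Topology

variable {X : Type*} [AddCommGroup X] [Module ℝ X] [PartialOrder X]
  [CovariantClass X X (· + ·) (· ≤ ·)] [PosSMulMono ℝ X]
  [TopologicalSpace X] [IsTopologicalAddGroup X] [ContinuousSMul ℝ X]

/-- The risk measure `ρ_{A,S}(x) = inf {m : x + (m/S₀)·S_T ∈ A}`, valued in `EReal`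
(with `inf ∅ = ⊤` and unbounded-below giving `⊥`). -/
noncomputable def rho (A : Set X) (S0 : ℝ) (ST : X) (x : X) : EReal :=
  sInf ((fun r : ℝ => (r : EReal)) '' {r : ℝ | x + (r / S0) • ST ∈ A})

/-- A set is monotone if it contains, with any element, every larger element. -/
def MonotoneSet (A : Set X) : Prop := ∀ x ∈ A, ∀ y, x ≤ y → y ∈ A

/-- An acceptance set: nonempty, proper, and monotone. -/
def AcceptanceSet (A : Set X) : Prop := A.Nonempty ∧ A ≠ Set.univ ∧ MonotoneSet A

/-- The algebraic core (algebraic interior) of a set. -/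
def algCore (A : Set X) : Set X :=
  {x | ∀ y : X, ∃ ε > 0, ∀ l : ℝ, |l| < ε → x + l • y ∈ A}

/-- helper: A monotone, a ∈ A, p ≥ 0 → a + p ∈ A -/
lemma add_nonneg_mem {A : Set X} (hmono : MonotoneSet A) {a p : X}
    (ha : a ∈ A) (hp : 0 ≤ p) : a + p ∈ A :=
  hmono a ha _ (le_add_of_nonneg_right hp)

/-- helper: segment lemma -/
lemma segment_mem {A : Set X} (hmono : MonotoneSet A)
    (hcone : ∀ c : ℝ, 0 ≤ c → ∀ a ∈ A, c • a ∈ A) {ST : X} (hST : 0 ≤ ST)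
    {z : X} {t : ℝ} (ht : 0 < t) (hmem : ST + t • z ∈ A) :
    ∀ l : ℝ, 0 ≤ l → l ≤ t → ST + l • z ∈ A := by
  intro l hl hlt
  have h1 : (l / t) • (ST + t • z) ∈ A := hcone _ (div_nonneg hl ht.le) _ hmem
  have hkey : ST + l • z = (l / t) • (ST + t • z) + (1 - l / t) • ST := by
    match_scalars <;> field_simp <;> ring
  rw [hkey]
  exact add_nonneg_mem hmono h1
    (smul_nonneg (by rw [sub_nonneg]; exact div_le_one_of_le₀ hlt ht.le) hST)

/-- helper: rho ≠ ⊤ iff the defining set is nonempty -/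
lemma rho_ne_top_iff (A : Set X) (S0 : ℝ) (ST : X) (x : X) :
    rho A S0 ST x ≠ ⊤ ↔ {r : ℝ | x + (r / S0) • ST ∈ A}.Nonempty := by
  constructor
  · intro h
    by_contra hne
    rw [Set.not_nonempty_iff_eq_empty] at hne
    apply h
    rw [rho, hne, Set.image_empty, sInf_empty]
  · rintro ⟨r, hr⟩ h
    have h1 : rho A S0 ST x ≤ (r : EReal) := sInf_le ⟨r, hr, rfl⟩
    rw [h] at h1
    exact (EReal.coe_lt_top r).not_ge h1

/-- for a conic acceptance set, ρ_{A,S} < ∞ everywhere iff S_T is in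
the core of A, and ρ_{A,S} > -∞ everywhere iff -S_T is in the core of the
complement of A. -/
theorem rho_conic_finiteness (A : Set X) (S0 : ℝ) (ST : X)
    (hA : AcceptanceSet A) (hcone : ∀ c : ℝ, 0 ≤ c → ∀ a ∈ A, c • a ∈ A)
    (hS0 : 0 < S0) (hST : 0 ≤ ST) (hSTne : ST ≠ 0) :
    ((∀ x : X, rho A S0 ST x ≠ ⊤) ↔ ST ∈ algCore A) ∧
    ((∀ x : X, rho A S0 ST x ≠ ⊥) ↔ -ST ∈ algCore Aᶜ) := by
  obtain ⟨⟨a0, ha0⟩, hproper, hmono⟩ := hA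
  have hzero : (0 : X) ∈ A := by
    have := hcone 0 le_rfl a0 ha0; rwa [zero_smul] at this
  have hSTA : ST ∈ A := hmono 0 hzero ST hST
  -- helper: from y + c•ST ∈ A with anything, get l > 0 with ST + l•y ∈ A
  have key : ∀ y : X, ∀ c : ℝ, y + c • ST ∈ A → ∃ l : ℝ, 0 < l ∧ ST + l • y ∈ A := by
    intro y c hc
    set c' : ℝ := max c 1 with hc'
    have hc'pos : 0 < c' := lt_of_lt_of_le one_pos (le_max_right _ _)
    have h1 : y + c' • ST ∈ A := by
      have heq : y + c' • ST = (y + c • ST) + (c' - c) • ST := by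
        rw [sub_smul]; abel
      rw [heq]
      exact add_nonneg_mem hmono hc
        (smul_nonneg (sub_nonneg.mpr (le_max_left _ _)) hST)
    refine ⟨1 / c', by positivity, ?_⟩
    have h2 : (1 / c') • (y + c' • ST) ∈ A := hcone _ (by positivity) _ h1
    have heq : (1 / c') • (y + c' • ST) = ST + (1 / c') • y := by
      match_scalars <;> field_simp
    rwa [heq] at h2
  constructor
  · constructor
    · -- finite everywhere → ST ∈ core A
      intro hfin y
      obtain ⟨r1, hr1⟩ := (rho_ne_top_iff A S0 ST y).mp (hfin y)
      obtain ⟨r2, hr2⟩ := (rho_ne_top_iff A S0 ST (-y)).mp (hfin (-y))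
      obtain ⟨l1, hl1pos, hl1⟩ := key y _ hr1
      obtain ⟨l2, hl2pos, hl2⟩ := key (-y) _ hr2
      refine ⟨min l1 l2, lt_min hl1pos hl2pos, ?_⟩
      intro l hl
      rcases le_or_gt 0 l with h | h
      · exact segment_mem hmono hcone hST hl1pos hl1 l h
          (le_of_lt (lt_of_lt_of_le (lt_of_abs_lt hl) (min_le_left _ _)))
      · have hml : -l ≤ l2 := by
          rw [abs_of_neg h] at hl
          linarith [min_le_right l1 l2]
        have := segment_mem hmono hcone hST hl2pos hl2 (-l) (by linarith) hml
        rwa [smul_neg, neg_smul, neg_neg] at this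
    · -- ST ∈ core A → finite everywhere
      intro hcore x
      rw [rho_ne_top_iff]
      obtain ⟨ε, hε, hεall⟩ := hcore x
      have h1 : ST + (ε / 2) • x ∈ A := hεall (ε / 2) (by rw [abs_of_pos (by positivity)]; linarith)
      have h2 : (2 / ε) • (ST + (ε / 2) • x) ∈ A := hcone _ (by positivity) _ h1
      refine ⟨2 * S0 / ε, ?_⟩
      have heq : (2 / ε) • (ST + (ε / 2) • x) = x + (2 * S0 / ε / S0) • ST := by
        match_scalars <;> field_simp <;> ring
      rwa [heq] at h2
  · constructor
    · -- never ⊥ → -ST ∈ core Aᶜ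
      intro hnb y
      by_contra hcon
      push_neg at hcon
      -- hcon : ∀ ε > 0, ∃ l, |l| < ε ∧ ¬ (-ST + l • y ∈ Aᶜ), i.e. -ST + l•y ∈ A
      -- helper: one-sided version implies rho z = ⊥
      have oneside : ∀ z : X, (∀ ε > (0:ℝ), ∃ l, 0 < l ∧ l < ε ∧ -ST + l • z ∈ A) →
          False := by
        intro z hz
        apply hnb z
        rw [EReal.eq_bot_iff_forall_lt]
        intro M
        obtain ⟨l, hlpos, hlε, hmem⟩ := hz (S0 / (|M| + 1)) (by positivity)
        have hmem2 : (1 / l) • (-ST + l • z) ∈ A :=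
          hcone _ (div_nonneg zero_le_one hlpos.le) _ hmem
        have heq : (1 / l) • (-ST + l • z) = z + ((-S0 / l) / S0) • ST := by
          have hl0 : l ≠ 0 := hlpos.ne'
          have hS0' : S0 ≠ 0 := hS0.ne'
          match_scalars <;> field_simp <;> ring
        rw [heq] at hmem2
        have hlt : -S0 / l < M := by
          have h1 : S0 / l > |M| + 1 := by
            rw [gt_iff_lt, lt_div_iff₀ hlpos]
            calc (|M| + 1) * l < (|M| + 1) * (S0 / (|M| + 1)) := by
                  apply mul_lt_mul_of_pos_left hlε (by positivity)
              _ = S0 := by field_simp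
          have h2 : -S0 / l < -(|M| + 1) := by rw [neg_div]; linarith
          calc -S0 / l < -(|M| + 1) := h2
            _ < -|M| := by linarith
            _ ≤ M := neg_abs_le M
        calc rho A S0 ST z ≤ ((-S0 / l : ℝ) : EReal) := sInf_le ⟨_, hmem2, rfl⟩
          _ < (M : EReal) := by exact_mod_cast hlt
      -- case analysis
      by_cases hR : -ST ∈ A
      · -- rho 0 = ⊥
        apply hnb 0
        rw [EReal.eq_bot_iff_forall_lt]
        intro M
        set r : ℝ := min M 0 - 1 with hr
        have hrneg : r < 0 := by
          have := min_le_right M 0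
          rw [hr]; linarith
        have hmem : (0 : X) + (r / S0) • ST ∈ A := by
          have h := hcone (-r / S0) (div_nonneg (by linarith) hS0.le) _ hR
          rw [smul_neg, ← neg_smul, neg_div, neg_neg] at h
          rwa [zero_add]
        have h1 : rho A S0 ST 0 ≤ (r : EReal) := sInf_le ⟨r, hmem, rfl⟩
        refine lt_of_le_of_lt h1 ?_
        have hrM : r < M := by
          have := min_le_left M 0
          rw [hr]; linarith
        exact_mod_cast hrM
      · -- neither P nor Q fails: derive P for y or P for -y
        by_cases hP : ∀ ε > (0:ℝ), ∃ l, 0 < l ∧ l < ε ∧ -ST + l • y ∈ A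
        · exact oneside y hP
        · push_neg at hP
          obtain ⟨ε1, hε1, hP1⟩ := hP
          apply oneside (-y)
          intro ε hε
          obtain ⟨l, hlabs, hlmem⟩ := hcon (min ε ε1) (lt_min hε hε1)
          rw [Set.notMem_compl_iff] at hlmem
          have hlne : l ≠ 0 := by rintro rfl; rw [zero_smul, add_zero] at hlmem; exact hR hlmem
          rcases lt_or_gt_of_ne hlne with h | h
          · refine ⟨-l, by linarith, ?_, ?_⟩
            · rw [abs_of_neg h] at hlabs
              exact lt_of_lt_of_le hlabs (min_le_left _ _)
            · rwa [smul_neg, neg_smul, neg_neg]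
          · exfalso
            apply hP1 l h
            · exact lt_of_lt_of_le (lt_of_abs_lt hlabs) (min_le_right _ _)
            · exact hlmem
    · -- -ST ∈ core Aᶜ → never ⊥
      intro hcore x
      obtain ⟨ε, hε, hεall⟩ := hcore x
      have hbd : ∀ r ∈ {r : ℝ | x + (r / S0) • ST ∈ A}, -(S0 / ε) ≤ r := by
        intro r hr
        by_contra hc
        push_neg at hc
        have hrneg : r < 0 := by
          have : 0 < S0 / ε := by positivity
          linarith
        set c : ℝ := -r / S0 with hcdef
        have hcpos : 0 < c := div_pos (by linarith) hS0
        have hcbig : 1 / ε < c := by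
          rw [hcdef, lt_div_iff₀ hS0]
          have h2 : 1 / ε * S0 = S0 / ε := by ring
          linarith
        have h1 : (1 / c) • (x + (r / S0) • ST) ∈ A :=
          hcone _ (div_nonneg zero_le_one hcpos.le) _ hr
        have heq : (1 / c) • (x + (r / S0) • ST) = -ST + (1 / c) • x := by
          have hS0' : S0 ≠ 0 := hS0.ne'
          have hr0 : r ≠ 0 := hrneg.ne
          rw [hcdef]; match_scalars <;> field_simp <;> ring
        rw [heq] at h1
        have habs : |1 / c| < ε := by
          rw [abs_of_pos (by positivity), div_lt_iff₀ hcpos]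
          calc (1:ℝ) = ε * (1 / ε) := by field_simp
            _ < ε * c := by apply mul_lt_mul_of_pos_left hcbig hε
        exact hεall (1 / c) habs h1
      intro hbot
      have h1 : ((-(S0 / ε) : ℝ) : EReal) ≤ rho A S0 ST x := by
        apply le_sInf
        rintro b ⟨r, hr, rfl⟩
        exact EReal.coe_le_coe_iff.mpr (hbd r hr)
      rw [hbot] at h1
      exact (EReal.coe_ne_bot _) (le_bot_iff.mp h1)
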